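/- Converse expansion inequality under a consistency side-condition: let n, m ≥ 0, A ⊆ Act, and a_i, b_j ∈ Act for each i < n and j < m. Assume that no p_i with a_i ∈ A and a_i ≠ b_j for all j < m lies in F, and no q_j with b_j ∈ A and b_j ≠ a_i for all i < n lies in F. Then ((□Ω₁) □ (□Ω₂)) □ (□Ω₃) ⊑_RS □_{i<n} a_i.p_i ∥_A □_{j<m} b_j.q_j, where □Ω₁ is the general external choice of all a_i.(p_i ∥_A □_{j<m} b_j.q_j) with i < n and a_i ∉ A, □Ω₂ is the general external choice of all b_j.((□_{i<n} a_i.p_i) ∥_A q_j) with j < m and b_j ∉ A, and □Ω₃ is the general external choice of all a_i.(p_i ∥_A q_j) with i < n, j < m and a_i = b_j ∈ A. -/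
import Mathlib


open Classical

/-- Visible actions plus the invisible action τ. -/
inductive ActT (Act : Type) : Type where
  | act : Act → ActT Act
  | tau : ActT Act

/-- Processes of the recursion-free calculus CLL. -/
inductive Proc (Act : Type) : Type where
  | nil  : Proc Act                                -- 0
  | bot  : Proc Act                                -- ⊥
  | pre  : ActT Act → Proc Act → Proc Act          -- α.t
  | ec   : Proc Act → Proc Act → Proc Act          -- t □ t
  | conj : Proc Act → Proc Act → Proc Act          -- t ∧ t
  | disj : Proc Act → Proc Act → Proc Act          -- t ∨ t
  | par  : Set Act → Proc Act → Proc Act → Proc Act -- t ∥_A t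

namespace Proc

variable {Act : Type}

/-- Whether a process has a τ-transition (structural stratification used for
the negative premises of the SOS rules). -/
def hasTau : Proc Act → Prop
  | nil => False
  | bot => False
  | pre a _ => a = ActT.tau
  | ec t₁ t₂ => hasTau t₁ ∨ hasTau t₂
  | conj t₁ t₂ => hasTau t₁ ∨ hasTau t₂
  | disj _ _ => True
  | par _ t₁ t₂ => hasTau t₁ ∨ hasTau t₂

/-- The transition relation, given by the SOS rules of CLL_R. -/
inductive Trans : Proc Act → ActT Act → Proc Act → Prop where
  | pre : Trans (pre α t) α t
  | ecL : Trans t₁ (ActT.act a) t₁' → ¬ hasTau t₂ →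
      Trans (ec t₁ t₂) (ActT.act a) t₁'
  | ecR : ¬ hasTau t₁ → Trans t₂ (ActT.act a) t₂' →
      Trans (ec t₁ t₂) (ActT.act a) t₂'
  | ecTauL : Trans t₁ ActT.tau t₁' → Trans (ec t₁ t₂) ActT.tau (ec t₁' t₂)
  | ecTauR : Trans t₂ ActT.tau t₂' → Trans (ec t₁ t₂) ActT.tau (ec t₁ t₂')
  | conjAct : Trans t₁ (ActT.act a) t₁' → Trans t₂ (ActT.act a) t₂' →
      Trans (conj t₁ t₂) (ActT.act a) (conj t₁' t₂')
  | conjTauL : Trans t₁ ActT.tau t₁' → Trans (conj t₁ t₂) ActT.tau (conj t₁' t₂)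
  | conjTauR : Trans t₂ ActT.tau t₂' → Trans (conj t₁ t₂) ActT.tau (conj t₁ t₂')
  | disjL : Trans (disj t₁ t₂) ActT.tau t₁
  | disjR : Trans (disj t₁ t₂) ActT.tau t₂
  | parTauL : Trans t₁ ActT.tau t₁' → Trans (par A t₁ t₂) ActT.tau (par A t₁' t₂)
  | parTauR : Trans t₂ ActT.tau t₂' → Trans (par A t₁ t₂) ActT.tau (par A t₁ t₂')
  | parL : a ∉ A → Trans t₁ (ActT.act a) t₁' → ¬ hasTau t₂ →
      Trans (par A t₁ t₂) (ActT.act a) (par A t₁' t₂)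
  | parR : a ∉ A → ¬ hasTau t₁ → Trans t₂ (ActT.act a) t₂' →
      Trans (par A t₁ t₂) (ActT.act a) (par A t₁ t₂')
  | parSync : a ∈ A → Trans t₁ (ActT.act a) t₁' → Trans t₂ (ActT.act a) t₂' →
      Trans (par A t₁ t₂) (ActT.act a) (par A t₁' t₂')

/-- The ready set I(p). -/
def ready (p : Proc Act) : Set (ActT Act) := {α | ∃ q, Trans p α q}

/-- p is stable if it has no τ-transition. -/
def Stable (p : Proc Act) : Prop := ∀ q, ¬ Trans p ActT.tau q

/-- The inconsistency predicate F, as the least predicate closed under the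
predicative rules of CLL_R. -/
inductive Fp : Proc Act → Prop where
  | bot : Fp bot
  | pre : Fp t → Fp (pre α t)
  | disj : Fp t₁ → Fp t₂ → Fp (disj t₁ t₂)
  | ecL : Fp t₁ → Fp (ec t₁ t₂)
  | ecR : Fp t₂ → Fp (ec t₁ t₂)
  | parL : Fp t₁ → Fp (par A t₁ t₂)
  | parR : Fp t₂ → Fp (par A t₁ t₂)
  | conjL : Fp t₁ → Fp (conj t₁ t₂)
  | conjR : Fp t₂ → Fp (conj t₁ t₂)
  | conjReady : Stable (conj t₁ t₂) → ready t₁ ≠ ready t₂ → Fp (conj t₁ t₂)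
  | conjSucc : Trans (conj t₁ t₂) α s → (∀ y, Trans (conj t₁ t₂) α y → Fp y) →
      Fp (conj t₁ t₂)
  | conjStable :
      (∀ y, Relation.ReflTransGen (fun x z => Trans x ActT.tau z) (conj t₁ t₂) y →
        Stable y → Fp y) →
      Fp (conj t₁ t₂)

/-- One τ-step with both endpoints consistent. -/
def tauStepF (p q : Proc Act) : Prop := Trans p ActT.tau q ∧ ¬ Fp p ∧ ¬ Fp q

/-- p ⇒_F| q : a sequence of τ-transitions from p to q, all states outside F,
with q stable. -/
def epsF (p q : Proc Act) : Prop :=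
  Relation.ReflTransGen tauStepF p q ∧ ¬ Fp p ∧ ¬ Fp q ∧ Stable q

/-- p =a⇒_F| q. -/
def wkF (a : Act) (p q : Proc Act) : Prop :=
  ∃ r s, Relation.ReflTransGen tauStepF p r ∧ ¬ Fp p ∧ ¬ Fp r ∧
    Trans r (ActT.act a) s ∧ ¬ Fp s ∧
    Relation.ReflTransGen tauStepF s q ∧ ¬ Fp q ∧ Stable q

/-- R is a stable ready simulation. -/
def StableRS (R : Proc Act → Proc Act → Prop) : Prop :=
  ∀ p q, R p q →
    Stable p ∧ Stable q ∧
    (¬ Fp p → ¬ Fp q) ∧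
    (∀ a p', wkF a p p' → ∃ q', wkF a q q' ∧ R p' q') ∧
    (¬ Fp p → ready p = ready q)

/-- p ⊏̃_RS q. -/
def rsLT (p q : Proc Act) : Prop := ∃ R, StableRS R ∧ R p q

/-- p ⊑_RS q. -/
def rsLE (p q : Proc Act) : Prop :=
  ∀ p', epsF p p' → ∃ q', epsF q q' ∧ rsLT p' q'

/-- p =_RS q. -/
def rsEq (p q : Proc Act) : Prop := rsLE p q ∧ rsLE q p

/-- Basic process terms T(Σ_B): no ⊥ and no ∧. -/
inductive Basic : Proc Act → Prop where
  | nil : Basic nil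
  | pre : Basic t → Basic (pre α t)
  | disj : Basic t₁ → Basic t₂ → Basic (disj t₁ t₂)
  | ec : Basic t₁ → Basic t₂ → Basic (ec t₁ t₂)
  | par : Basic t₁ → Basic t₂ → Basic (par A t₁ t₂)

/-- General external choice □ over a finite sequence (left-nested). -/
def ecList : List (Proc Act) → Proc Act
  | [] => nil
  | t :: ts => ts.foldl ec t

/-- General disjunction ⋁ over a nonempty finite sequence (left-nested). -/
def djList : List (Proc Act) → Proc Act
  | [] => bot
  | t :: ts => ts.foldl disj t

/-- □_{i<n} a_i.t_i for a sequence of prefixed terms. -/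
def ecPre (l : List (Act × Proc Act)) : Proc Act :=
  ecList (l.map fun x => pre (ActT.act x.1) x.2)

/-- The expansion term E = ((□Ω₁) □ (□Ω₂)) □ (□Ω₃). -/
noncomputable def expTerm (A : Set Act) (l₁ l₂ : List (Act × Proc Act)) : Proc Act :=
  ec (ec
      (ecList ((l₁.filter fun x => decide (x.1 ∉ A)).map
        fun x => pre (ActT.act x.1) (par A x.2 (ecPre l₂))))
      (ecList ((l₂.filter fun x => decide (x.1 ∉ A)).map
        fun x => pre (ActT.act x.1) (par A (ecPre l₁) x.2))))
    (ecList (l₁.flatMap fun x =>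
      (l₂.filter fun y => decide (y.1 = x.1 ∧ x.1 ∈ A)).map
        fun y => pre (ActT.act x.1) (par A x.2 y.2)))

/-- Normal forms NF_B. -/
inductive NFB : Proc Act → Prop where
  | mk (ls : List (List (Act × Proc Act))) (hne : ls ≠ [])
      (hnodup : ∀ l ∈ ls, (l.map Prod.fst).Nodup)
      (hsub : ∀ l ∈ ls, ∀ x ∈ l, NFB x.2) :
      NFB (djList (ls.map ecPre))

/-- NF = NF_B ∪ {⊥}. -/
def NF (p : Proc Act) : Prop := NFB p ∨ p = bot

/-- Derivability ⊢ t ≤ t' in the proof system AX_CLL. -/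
inductive Deriv : Proc Act → Proc Act → Prop where
  | refl (t) : Deriv t t
  | trans : Deriv t t' → Deriv t' t'' → Deriv t t''
  | mono_pre : Deriv t t' → Deriv (pre α t) (pre α t')
  | mono_ec : Deriv s s' → Deriv t t' → Deriv (ec s t) (ec s' t')
  | mono_conj : Deriv s s' → Deriv t t' → Deriv (conj s t) (conj s' t')
  | mono_disj : Deriv s s' → Deriv t t' → Deriv (disj s t) (disj s' t')
  | mono_par : Deriv s s' → Deriv t t' → Deriv (par A s t) (par A s' t')
  -- external choice
  | ec_comm : Deriv (ec x y) (ec y x)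
  | ec_assoc₁ : Deriv (ec (ec x y) z) (ec x (ec y z))
  | ec_assoc₂ : Deriv (ec x (ec y z)) (ec (ec x y) z)
  | ec_idem₁ : Deriv (ec x x) x
  | ec_idem₂ : Deriv x (ec x x)
  | ec_nil₁ : Deriv (ec x nil) x
  | ec_nil₂ : Deriv x (ec x nil)
  | ec_bot₁ : Deriv (ec x bot) bot
  | ec_bot₂ : Deriv bot (ec x bot)
  -- disjunction
  | disj_comm : Deriv (disj x y) (disj y x)
  | disj_assoc₁ : Deriv (disj x (disj y z)) (disj (disj x y) z)
  | disj_assoc₂ : Deriv (disj (disj x y) z) (disj x (disj y z))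
  | disj_idem₁ : Deriv (disj x x) x
  | disj_idem₂ : Deriv x (disj x x)
  | disj_bot₁ : Deriv (disj x bot) x
  | disj_bot₂ : Deriv x (disj x bot)
  | disj_le : Deriv x (disj x y)
  -- conjunction
  | conj_comm : Deriv (conj x y) (conj y x)
  | conj_idem₁ : Deriv (conj x x) x
  | conj_idem₂ : Deriv x (conj x x)
  | conj_bot₁ : Deriv (conj x bot) bot
  | conj_bot₂ : Deriv bot (conj x bot)
  -- prefixing
  | pre_bot₁ : Deriv (pre (ActT.act a) bot) bot
  | pre_bot₂ : Deriv bot (pre (ActT.act a) bot)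
  | tau_pre₁ : Deriv (pre ActT.tau x) x
  | tau_pre₂ : Deriv x (pre ActT.tau x)
  -- parallel
  | par_comm : Deriv (par A x y) (par A y x)
  | par_bot₁ : Deriv (par A x bot) bot
  | par_bot₂ : Deriv bot (par A x bot)
  -- distribution over disjunction
  | ds_ec : Deriv (ec x (disj y z)) (disj (ec x y) (ec x z))
  | ds_conj : Deriv (conj x (disj y z)) (disj (conj x y) (conj x z))
  | ds_par : Deriv (par A x (disj y z)) (disj (par A x y) (par A x z))
  | ds_pre : Basic x → Basic y →
      Deriv (pre (ActT.act a) (disj x y)) (ec (pre (ActT.act a) x) (pre (ActT.act a) y))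
  -- external choice and conjunction
  | ecc1₁ (l₁ l₂ : List (Act × Proc Act)) :
      {a | a ∈ l₁.map Prod.fst} ≠ {a | a ∈ l₂.map Prod.fst} →
      Deriv (conj (ecPre l₁) (ecPre l₂)) bot
  | ecc1₂ (l₁ l₂ : List (Act × Proc Act)) :
      {a | a ∈ l₁.map Prod.fst} ≠ {a | a ∈ l₂.map Prod.fst} →
      Deriv bot (conj (ecPre l₁) (ecPre l₂))
  | ecc2 (l : List (Act × Proc Act × Proc Act)) :
      Deriv (ecPre (l.map fun x => (x.1, conj x.2.1 x.2.2)))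
            (conj (ecPre (l.map fun x => (x.1, x.2.1)))
                  (ecPre (l.map fun x => (x.1, x.2.2))))
  | ecc3 (l : List (Act × Proc Act × Proc Act)) :
      (l.map Prod.fst).Nodup →
      Deriv (conj (ecPre (l.map fun x => (x.1, x.2.1)))
                  (ecPre (l.map fun x => (x.1, x.2.2))))
            (ecPre (l.map fun x => (x.1, conj x.2.1 x.2.2)))
  -- expansion
  | exp1 (A : Set Act) (l₁ l₂ : List (Act × Proc Act)) :
      Deriv (par A (ecPre l₁) (ecPre l₂)) (expTerm A l₁ l₂)
  | exp2 (A : Set Act) (l₁ l₂ : List (Act × Proc Act)) :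
      (∀ x ∈ l₁, Basic x.2) → (∀ x ∈ l₂, Basic x.2) →
      Deriv (expTerm A l₁ l₂) (par A (ecPre l₁) (ecPre l₂))

end Proc

namespace Proc

section Aux

variable {Act : Type}

lemma hasTau_of_tau : ∀ {p u : Proc Act} {α}, Trans p α u → α = ActT.tau → hasTau p := by
  intro p u α h
  induction h <;> simp_all [hasTau]

lemma stable_of_not_hasTau {p : Proc Act} (h : ¬ hasTau p) : Stable p :=
  fun _ ht => h (hasTau_of_tau ht rfl)

lemma trans_pre_inv {α β : ActT Act} {t u : Proc Act} (h : Trans (pre α t) β u) :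
    β = α ∧ u = t := by cases h; exact ⟨rfl, rfl⟩

lemma hasTau_ec_iff {t₁ t₂ : Proc Act} : hasTau (ec t₁ t₂) ↔ hasTau t₁ ∨ hasTau t₂ := Iff.rfl

lemma hasTau_foldl {l : List (Proc Act)} : ∀ {t : Proc Act},
    hasTau (l.foldl ec t) ↔ hasTau t ∨ ∃ s ∈ l, hasTau s := by
  induction l with
  | nil => simp
  | cons s ls ih =>
    intro t
    simp only [List.foldl_cons, ih, hasTau_ec_iff, List.mem_cons]
    constructor
    · rintro ((h | h) | ⟨x, hx, h⟩)
      · exact Or.inl h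
      · exact Or.inr ⟨s, Or.inl rfl, h⟩
      · exact Or.inr ⟨x, Or.inr hx, h⟩
    · rintro (h | ⟨x, (rfl | hx), h⟩)
      · exact Or.inl (Or.inl h)
      · exact Or.inl (Or.inr h)
      · exact Or.inr ⟨x, hx, h⟩

lemma trans_ec_act {t₁ t₂ : Proc Act} {a : Act} {u : Proc Act}
    (h1 : ¬ hasTau t₁) (h2 : ¬ hasTau t₂) :
    Trans (ec t₁ t₂) (ActT.act a) u ↔ Trans t₁ (ActT.act a) u ∨ Trans t₂ (ActT.act a) u := by
  constructor
  · intro h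
    cases h with
    | ecL h _ => exact Or.inl h
    | ecR _ h => exact Or.inr h
  · rintro (h | h)
    · exact Trans.ecL h h2
    · exact Trans.ecR h1 h

lemma trans_foldl_ec {l : List (Proc Act)} {a : Act} {u : Proc Act} :
    ∀ {t : Proc Act}, ¬ hasTau t → (∀ s ∈ l, ¬ hasTau s) →
    (Trans (l.foldl ec t) (ActT.act a) u ↔
      Trans t (ActT.act a) u ∨ ∃ s ∈ l, Trans s (ActT.act a) u) := by
  induction l with
  | nil => intro t _ _; simp
  | cons s ls ih =>
    intro t ht hl
    have hs : ¬ hasTau s := hl s (.head _)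
    have hts : ¬ hasTau (ec t s) := by
      rw [hasTau_ec_iff]; rintro (h | h); exacts [ht h, hs h]
    have := ih (t := ec t s) hts (fun x hx => hl x (.tail _ hx))
    simp only [List.foldl_cons, this, trans_ec_act ht hs, List.mem_cons]
    constructor
    · rintro ((h | h) | ⟨x, hx, h⟩)
      · exact Or.inl h
      · exact Or.inr ⟨s, Or.inl rfl, h⟩
      · exact Or.inr ⟨x, Or.inr hx, h⟩
    · rintro (h | ⟨x, (rfl | hx), h⟩)
      · exact Or.inl (Or.inl h)
      · exact Or.inl (Or.inr h)
      · exact Or.inr ⟨x, hx, h⟩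

lemma notau_ecList {l : List (Proc Act)}
    (hl : ∀ s ∈ l, ∃ b p, s = pre (ActT.act b) p) : ¬ hasTau (ecList l) := by
  cases l with
  | nil => simp [ecList, hasTau]
  | cons t ts =>
    simp only [ecList, hasTau_foldl]
    rintro (h | ⟨x, hx, h⟩)
    · obtain ⟨b, p, rfl⟩ := hl t (.head _)
      simp [hasTau] at h
    · obtain ⟨b, p, rfl⟩ := hl x (.tail _ hx)
      simp [hasTau] at h

lemma trans_ecList {l : List (Proc Act)} {a : Act} {u : Proc Act}
    (hl : ∀ s ∈ l, ∃ b p, s = pre (ActT.act b) p) :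
    Trans (ecList l) (ActT.act a) u ↔ pre (ActT.act a) u ∈ l := by
  have key : ∀ s ∈ l, ∀ {v : Proc Act},
      Trans s (ActT.act a) v ↔ s = pre (ActT.act a) v := by
    intro s hs v
    obtain ⟨b, p, rfl⟩ := hl s hs
    constructor
    · intro h
      obtain ⟨h1, h2⟩ := trans_pre_inv h
      cases h1; cases h2; rfl
    · intro h
      cases h; exact Trans.pre
  cases l with
  | nil =>
    simp only [ecList, List.not_mem_nil, iff_false]
    intro h; cases h
  | cons t ts =>
    have ht : ¬ hasTau t := by
      obtain ⟨b, p, rfl⟩ := hl t (.head _); simp [hasTau]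
    have hts : ∀ s ∈ ts, ¬ hasTau s := by
      intro s hs
      obtain ⟨b, p, rfl⟩ := hl s (.tail _ hs); simp [hasTau]
    simp only [ecList, trans_foldl_ec ht hts, List.mem_cons]
    constructor
    · rintro (h | ⟨x, hx, h⟩)
      · exact Or.inl ((key t (.head _)).1 h).symm
      · exact Or.inr (((key x (.tail _ hx)).1 h) ▸ hx)
    · rintro (h | h)
      · exact Or.inl ((key t (.head _)).2 h.symm)
      · exact Or.inr ⟨_, h, (key _ (.tail _ h)).2 rfl⟩

lemma notau_ecPre {l : List (Act × Proc Act)} : ¬ hasTau (ecPre l) := by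
  apply notau_ecList
  intro s hs
  simp only [List.mem_map] at hs
  obtain ⟨x, _, rfl⟩ := hs
  exact ⟨x.1, x.2, rfl⟩

lemma trans_ecPre {l : List (Act × Proc Act)} {a : Act} {u : Proc Act} :
    Trans (ecPre l) (ActT.act a) u ↔ (a, u) ∈ l := by
  rw [ecPre, trans_ecList (by
    intro s hs
    simp only [List.mem_map] at hs
    obtain ⟨x, _, rfl⟩ := hs
    exact ⟨x.1, x.2, rfl⟩)]
  simp only [List.mem_map]
  constructor
  · rintro ⟨x, hx, hpre⟩
    have h1 : x.1 = a ∧ x.2 = u := by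
      injection hpre with h1 h2
      injection h1 with h1
      exact ⟨h1, h2⟩
    have : x = (a, u) := Prod.ext h1.1 h1.2
    exact this ▸ hx
  · intro h
    exact ⟨(a, u), h, rfl⟩

lemma fp_nil : ¬ Fp (nil : Proc Act) := by intro h; cases h

lemma fp_pre_iff {α : ActT Act} {t : Proc Act} : Fp (pre α t) ↔ Fp t := by
  constructor
  · intro h; cases h; assumption
  · exact Fp.pre

lemma fp_ec_iff {t₁ t₂ : Proc Act} : Fp (ec t₁ t₂) ↔ Fp t₁ ∨ Fp t₂ := by
  constructor
  · intro h
    cases h with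
    | ecL h => exact Or.inl h
    | ecR h => exact Or.inr h
  · rintro (h | h); exacts [Fp.ecL h, Fp.ecR h]

lemma fp_par_iff {A : Set Act} {t₁ t₂ : Proc Act} :
    Fp (par A t₁ t₂) ↔ Fp t₁ ∨ Fp t₂ := by
  constructor
  · intro h
    cases h with
    | parL h => exact Or.inl h
    | parR h => exact Or.inr h
  · rintro (h | h); exacts [Fp.parL h, Fp.parR h]

lemma fp_foldl {l : List (Proc Act)} : ∀ {t : Proc Act},
    Fp (l.foldl ec t) ↔ Fp t ∨ ∃ s ∈ l, Fp s := by
  induction l with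
  | nil => simp
  | cons s ls ih =>
    intro t
    simp only [List.foldl_cons, ih, fp_ec_iff, List.mem_cons]
    constructor
    · rintro ((h | h) | ⟨x, hx, h⟩)
      · exact Or.inl h
      · exact Or.inr ⟨s, Or.inl rfl, h⟩
      · exact Or.inr ⟨x, Or.inr hx, h⟩
    · rintro (h | ⟨x, (rfl | hx), h⟩)
      · exact Or.inl (Or.inl h)
      · exact Or.inl (Or.inr h)
      · exact Or.inr ⟨x, hx, h⟩

lemma fp_ecList {l : List (Proc Act)} : Fp (ecList l) ↔ ∃ s ∈ l, Fp s := by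
  cases l with
  | nil => simp [ecList, fp_nil]
  | cons t ts =>
    simp only [ecList, fp_foldl, List.mem_cons]
    constructor
    · rintro (h | ⟨x, hx, h⟩)
      · exact ⟨t, Or.inl rfl, h⟩
      · exact ⟨x, Or.inr hx, h⟩
    · rintro ⟨x, (rfl | hx), h⟩
      · exact Or.inl h
      · exact Or.inr ⟨x, hx, h⟩

lemma fp_ecPre {l : List (Act × Proc Act)} : Fp (ecPre l) ↔ ∃ x ∈ l, Fp x.2 := by
  rw [ecPre, fp_ecList]
  simp only [List.mem_map]
  constructor
  · rintro ⟨s, ⟨x, hx, rfl⟩, h⟩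
    exact ⟨x, hx, fp_pre_iff.1 h⟩
  · rintro ⟨x, hx, h⟩
    exact ⟨_, ⟨x, hx, rfl⟩, fp_pre_iff.2 h⟩

lemma chain_of_stable {p r : Proc Act} (hp : Stable p)
    (h : Relation.ReflTransGen tauStepF p r) : r = p := by
  rcases (Relation.ReflTransGen.cases_head h) with rfl | ⟨c, hc, _⟩
  · rfl
  · exact absurd hc.1 (hp c)

end Aux

section Main

variable {Act : Type} {A : Set Act} {l₁ l₂ : List (Act × Proc Act)}

lemma shape1 : ∀ s ∈ ((l₁.filter fun x => decide (x.1 ∉ A)).map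
      fun x => pre (ActT.act x.1) (par A x.2 (ecPre l₂))),
    ∃ b p, s = pre (ActT.act b) p := by
  intro s hs
  simp only [List.mem_map] at hs
  obtain ⟨x, _, rfl⟩ := hs
  exact ⟨_, _, rfl⟩

lemma shape2 : ∀ s ∈ ((l₂.filter fun x => decide (x.1 ∉ A)).map
      fun x => pre (ActT.act x.1) (par A (ecPre l₁) x.2)),
    ∃ b p, s = pre (ActT.act b) p := by
  intro s hs
  simp only [List.mem_map] at hs
  obtain ⟨x, _, rfl⟩ := hs
  exact ⟨_, _, rfl⟩

lemma shape3 : ∀ s ∈ (l₁.flatMap fun x =>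
      (l₂.filter fun y => decide (y.1 = x.1 ∧ x.1 ∈ A)).map
        fun y => pre (ActT.act x.1) (par A x.2 y.2)),
    ∃ b p, s = pre (ActT.act b) p := by
  intro s hs
  simp only [List.mem_flatMap, List.mem_map] at hs
  obtain ⟨x, _, y, _, rfl⟩ := hs
  exact ⟨_, _, rfl⟩

lemma notau_exp : ¬ hasTau (expTerm A l₁ l₂) := by
  rw [expTerm, hasTau_ec_iff, hasTau_ec_iff]
  rintro ((h | h) | h)
  · exact notau_ecList shape1 h
  · exact notau_ecList shape2 h
  · exact notau_ecList shape3 h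

lemma notau_parTerm : ¬ hasTau (par A (ecPre l₁) (ecPre l₂)) := by
  rintro (h | h)
  · exact notau_ecPre h
  · exact notau_ecPre h

lemma trans_par_iff {a : Act} {u : Proc Act} :
    Trans (par A (ecPre l₁) (ecPre l₂)) (ActT.act a) u ↔
      (a ∉ A ∧ ∃ p, (a, p) ∈ l₁ ∧ u = par A p (ecPre l₂)) ∨
      (a ∉ A ∧ ∃ q, (a, q) ∈ l₂ ∧ u = par A (ecPre l₁) q) ∨
      (a ∈ A ∧ ∃ p q, (a, p) ∈ l₁ ∧ (a, q) ∈ l₂ ∧ u = par A p q) := by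
  constructor
  · intro h
    cases h with
    | parL hA h _ => exact Or.inl ⟨hA, _, trans_ecPre.1 h, rfl⟩
    | parR hA _ h => exact Or.inr (Or.inl ⟨hA, _, trans_ecPre.1 h, rfl⟩)
    | parSync hA h1 h2 =>
        exact Or.inr (Or.inr ⟨hA, _, _, trans_ecPre.1 h1, trans_ecPre.1 h2, rfl⟩)
  · rintro (⟨hA, p, hp, rfl⟩ | ⟨hA, q, hq, rfl⟩ | ⟨hA, p, q, hp, hq, rfl⟩)
    · exact Trans.parL hA (trans_ecPre.2 hp) notau_ecPre
    · exact Trans.parR hA notau_ecPre (trans_ecPre.2 hq)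
    · exact Trans.parSync hA (trans_ecPre.2 hp) (trans_ecPre.2 hq)

lemma trans_exp_iff {a : Act} {u : Proc Act} :
    Trans (expTerm A l₁ l₂) (ActT.act a) u ↔
      Trans (par A (ecPre l₁) (ecPre l₂)) (ActT.act a) u := by
  rw [trans_par_iff, expTerm,
    trans_ec_act (by rw [hasTau_ec_iff]
                     rintro (h | h)
                     exacts [notau_ecList shape1 h, notau_ecList shape2 h])
      (notau_ecList shape3),
    trans_ec_act (notau_ecList shape1) (notau_ecList shape2),
    trans_ecList shape1, trans_ecList shape2, trans_ecList shape3]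
  simp only [List.mem_map, List.mem_filter, List.mem_flatMap, decide_eq_true_eq,
    Proc.pre.injEq, ActT.act.injEq]
  constructor
  · rintro ((⟨⟨x1, x2⟩, ⟨hx, hxA⟩, rfl, rfl⟩ | ⟨⟨y1, y2⟩, ⟨hy, hyA⟩, rfl, rfl⟩) |
      ⟨⟨x1, x2⟩, hx, ⟨y1, y2⟩, ⟨hy, heq, hA⟩, rfl, rfl⟩)
    · exact Or.inl ⟨hxA, x2, hx, rfl⟩
    · exact Or.inr (Or.inl ⟨hyA, y2, hy, rfl⟩)
    · dsimp at heq hA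
      subst heq
      exact Or.inr (Or.inr ⟨hA, x2, y2, hx, hy, rfl⟩)
  · rintro (⟨hA, p, hp, rfl⟩ | ⟨hA, q, hq, rfl⟩ | ⟨hA, p, q, hp, hq, rfl⟩)
    · exact Or.inl (Or.inl ⟨(a, p), ⟨hp, hA⟩, rfl, rfl⟩)
    · exact Or.inl (Or.inr ⟨(a, q), ⟨hq, hA⟩, rfl, rfl⟩)
    · exact Or.inr ⟨(a, p), hp, (a, q), ⟨hq, rfl, hA⟩, rfl, rfl⟩

lemma ready_exp_eq : ready (expTerm A l₁ l₂) = ready (par A (ecPre l₁) (ecPre l₂)) := by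
  ext α
  cases α with
  | act a => simp only [ready, Set.mem_setOf_eq]; exact exists_congr fun u => trans_exp_iff
  | tau =>
    simp only [ready, Set.mem_setOf_eq]
    constructor
    · rintro ⟨u, hu⟩; exact absurd (hasTau_of_tau hu rfl) notau_exp
    · rintro ⟨u, hu⟩; exact absurd (hasTau_of_tau hu rfl) notau_parTerm

lemma fp_exp_imp
    (h₁ : ∀ x ∈ l₁, x.1 ∈ A → (∀ y ∈ l₂, y.1 ≠ x.1) → ¬ Fp x.2)
    (h₂ : ∀ y ∈ l₂, y.1 ∈ A → (∀ x ∈ l₁, x.1 ≠ y.1) → ¬ Fp y.2)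
    (hE : ¬ Fp (expTerm A l₁ l₂)) : ¬ Fp (par A (ecPre l₁) (ecPre l₂)) := by
  intro hP
  apply hE
  rw [expTerm, fp_ec_iff, fp_ec_iff]
  rw [fp_par_iff, fp_ecPre, fp_ecPre] at hP
  rcases hP with ⟨x, hx, hfx⟩ | ⟨y, hy, hfy⟩
  · by_cases hA : x.1 ∈ A
    · have hex : ∃ y ∈ l₂, y.1 = x.1 := by
        by_contra hc
        push_neg at hc
        exact h₁ x hx hA hc hfx
      obtain ⟨y, hy, hyx⟩ := hex
      refine Or.inr (fp_ecList.2 ⟨pre (ActT.act x.1) (par A x.2 y.2), ?_, ?_⟩)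
      · simp only [List.mem_flatMap, List.mem_map, List.mem_filter, decide_eq_true_eq]
        exact ⟨x, hx, y, ⟨hy, hyx, hA⟩, rfl⟩
      · exact fp_pre_iff.2 (fp_par_iff.2 (Or.inl hfx))
    · refine Or.inl (Or.inl (fp_ecList.2 ⟨pre (ActT.act x.1) (par A x.2 (ecPre l₂)), ?_, ?_⟩))
      · simp only [List.mem_map, List.mem_filter, decide_eq_true_eq]
        exact ⟨x, ⟨hx, hA⟩, rfl⟩
      · exact fp_pre_iff.2 (fp_par_iff.2 (Or.inl hfx))
  · by_cases hA : y.1 ∈ A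
    · have hex : ∃ x ∈ l₁, x.1 = y.1 := by
        by_contra hc
        push_neg at hc
        exact h₂ y hy hA hc hfy
      obtain ⟨x, hx, hxy⟩ := hex
      refine Or.inr (fp_ecList.2 ⟨pre (ActT.act x.1) (par A x.2 y.2), ?_, ?_⟩)
      · simp only [List.mem_flatMap, List.mem_map, List.mem_filter, decide_eq_true_eq]
        exact ⟨x, hx, y, ⟨hy, hxy.symm, hxy ▸ hA⟩, rfl⟩
      · exact fp_pre_iff.2 (fp_par_iff.2 (Or.inr hfy))
    · refine Or.inl (Or.inr (fp_ecList.2 ⟨pre (ActT.act y.1) (par A (ecPre l₁) y.2), ?_, ?_⟩))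
      · simp only [List.mem_map, List.mem_filter, decide_eq_true_eq]
        exact ⟨y, ⟨hy, hA⟩, rfl⟩
      · exact fp_pre_iff.2 (fp_par_iff.2 (Or.inr hfy))

end Main

/-- Converse expansion inequality under a consistency side-condition. -/
theorem stmt13 {Act : Type} (A : Set Act) (l₁ l₂ : List (Act × Proc Act))
    (h₁ : ∀ x ∈ l₁, x.1 ∈ A → (∀ y ∈ l₂, y.1 ≠ x.1) → ¬ Fp x.2)
    (h₂ : ∀ y ∈ l₂, y.1 ∈ A → (∀ x ∈ l₁, x.1 ≠ y.1) → ¬ Fp y.2) :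
    rsLE (expTerm A l₁ l₂) (par A (ecPre l₁) (ecPre l₂)) := by
  intro p' hp'
  obtain ⟨hchain, hnE, hnp', hstp'⟩ := hp'
  have hEst : Stable (expTerm A l₁ l₂) := stable_of_not_hasTau notau_exp
  have hPst : Stable (par A (ecPre l₁) (ecPre l₂)) := stable_of_not_hasTau notau_parTerm
  have hp'eq : p' = expTerm A l₁ l₂ := chain_of_stable hEst hchain
  subst hp'eq
  have hnP : ¬ Fp (par A (ecPre l₁) (ecPre l₂)) := fp_exp_imp h₁ h₂ hnE
  refine ⟨par A (ecPre l₁) (ecPre l₂),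
    ⟨Relation.ReflTransGen.refl, hnP, hnP, hPst⟩, ?_⟩
  refine ⟨fun p q => (Stable p ∧ p = q) ∨
    (p = expTerm A l₁ l₂ ∧ q = par A (ecPre l₁) (ecPre l₂)), ?_, Or.inr ⟨rfl, rfl⟩⟩
  intro p q hpq
  rcases hpq with ⟨hst, rfl⟩ | ⟨rfl, rfl⟩
  · refine ⟨hst, hst, fun h => h, ?_, fun _ => rfl⟩
    intro a p'' hw
    have hstp'' : Stable p'' := hw.choose_spec.choose_spec.2.2.2.2.2.2.2
    exact ⟨p'', hw, Or.inl ⟨hstp'', rfl⟩⟩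
  · refine ⟨hEst, hPst, fun _ => hnP, ?_, fun _ => ready_exp_eq⟩
    intro a p'' hw
    obtain ⟨r, s, hc1, hnE', hnr, htr, hns, hc2, hnp'', hstp''⟩ := hw
    have hreq : r = expTerm A l₁ l₂ := chain_of_stable hEst hc1
    subst hreq
    exact ⟨p'', ⟨par A (ecPre l₁) (ecPre l₂), s, Relation.ReflTransGen.refl, hnP, hnP,
      trans_exp_iff.1 htr, hns, hc2, hnp'', hstp''⟩, Or.inl ⟨hstp'', rfl⟩⟩

end Proc
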